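/- Let g : ℝⁿ → ℝ be differentiable with L-Lipschitz gradient, h₁ : ℝⁿ → ℝ ∪ {+∞} a proper lower semicontinuous convex function, h₂ : ℝⁿ → ℝ a continuous convex function, f = g + h₁ − h₂. Let x, x⁺ ∈ ℝⁿ with h₁(x) and h₁(x⁺) finite, d = x⁺ − x, ξ ∈ ∂h₂(x), B a symmetric matrix with m‖u‖² ≤ uᵀBu for all u (m > 0), θ̄ ∈ (0,1], and suppose r ∈ ℝⁿ satisfies r − (∇g(x) − ξ) − B d ∈ ∂h₁(x⁺) and ‖r‖_{B⁻¹} ≤ (1 − θ̄)‖d‖_B. Then for every η ∈ (0,1], f(x + ηd) ≤ f(x) + η(ηL/(2m) − θ̄)‖d‖_B². In particular, f(x + ηd) ≤ f(x) whenever η < 2mθ̄/L. -/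

import Mathlib

open Matrix Filter Topology RealInnerProductSpace

noncomputable section

/-- `n`-dimensional Euclidean space. -/
abbrev Euc (n : ℕ) := EuclideanSpace ℝ (Fin n)

/-- `v` is a subgradient of the extended-real-valued convex function `φ` at `x`. -/
def ESubgradAt {n : ℕ} (φ : Euc n → EReal) (v x : Euc n) : Prop :=
  ∀ y : Euc n, φ x + ((⟪v, y - x⟫ : ℝ) : EReal) ≤ φ y

/-- `v` is a subgradient of the real-valued convex function `φ` at `x`. -/
def RSubgradAt {n : ℕ} (φ : Euc n → ℝ) (v x : Euc n) : Prop :=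
  ∀ y : Euc n, φ x + ⟪v, y - x⟫ ≤ φ y

/-- Convexity of an extended-real-valued function. -/
def EConvexF {n : ℕ} (φ : Euc n → EReal) : Prop :=
  ∀ x y : Euc n, ∀ a b : ℝ, 0 ≤ a → 0 ≤ b → a + b = 1 →
    φ (a • x + b • y) ≤ (a : EReal) * φ x + (b : EReal) * φ y

/-- Properness of an extended-real-valued function: never `⊥` and finite somewhere. -/
def ProperF {n : ℕ} (φ : Euc n → EReal) : Prop :=
  (∀ x, φ x ≠ ⊥) ∧ (∃ x, φ x ≠ ⊤)

/-- The quadratic form `uᵀ B u`. -/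
def quadF {n : ℕ} (B : Matrix (Fin n) (Fin n) ℝ) (u : Euc n) : ℝ :=
  ⟪u, (Matrix.toEuclideanLin B) u⟫

/-- The scaled norm `‖u‖_B = √(uᵀ B u)`. -/
def MNorm {n : ℕ} (B : Matrix (Fin n) (Fin n) ℝ) (u : Euc n) : ℝ :=
  Real.sqrt (quadF B u)

/-- The objective `f = g + h₁ - h₂`. -/
def fObj {n : ℕ} (g : Euc n → ℝ) (h₁ : Euc n → EReal) (h₂ : Euc n → ℝ) (x : Euc n) : EReal :=
  (g x : EReal) + h₁ x - (h₂ x : EReal)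

/- Auxiliary lemmas -/

lemma symB {n : ℕ} {B : Matrix (Fin n) (Fin n) ℝ} (hB : B.IsSymm) (u v : Euc n) :
    ⟪u, (Matrix.toEuclideanLin B) v⟫ = ⟪(Matrix.toEuclideanLin B) u, v⟫ := by
  have h : B.conjTranspose = B := by
    rw [Matrix.conjTranspose, ← Matrix.IsSymm.eq hB]
    ext i j
    simpa using hB.apply j i
  conv_rhs => rw [← h, Matrix.toEuclideanLin_conjTranspose_eq_adjoint,
    LinearMap.adjoint_inner_left]

lemma toEuclideanLin_mul' {n : ℕ} (A B : Matrix (Fin n) (Fin n) ℝ) (x : Euc n) :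
    Matrix.toEuclideanLin (A * B) x = Matrix.toEuclideanLin A (Matrix.toEuclideanLin B x) := by
  simp [Matrix.toEuclideanLin_apply, Matrix.mulVec_mulVec]

lemma quadF_dot {n : ℕ} (B : Matrix (Fin n) (Fin n) ℝ) (x : Fin n → ℝ) :
    quadF B ((WithLp.equiv 2 (Fin n → ℝ)).symm x) = dotProduct x (B *ᵥ x) := by
  simp [quadF, PiLp.inner_apply, Matrix.toEuclideanLin_apply, dotProduct,
    RCLike.inner_apply, mul_comm]

lemma posDef_of_quad {n : ℕ} {B : Matrix (Fin n) (Fin n) ℝ} {m : ℝ} (hm : 0 < m)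
    (hB : B.IsSymm) (hBlow : ∀ u : Euc n, m * ‖u‖ ^ 2 ≤ quadF B u) : B.PosDef := by
  refine Matrix.PosDef.of_dotProduct_mulVec_pos ?_ ?_
  · rw [Matrix.IsHermitian, ← Matrix.IsSymm.eq hB]; ext i j; simpa using hB.apply j i
  · intro x hx
    have h := hBlow ((WithLp.equiv 2 (Fin n → ℝ)).symm x)
    rw [quadF_dot] at h
    have hx' : (0:ℝ) < ‖(WithLp.equiv 2 (Fin n → ℝ)).symm x‖ := by
      simp only [norm_pos_iff]
      simpa using hx
    calc (0:ℝ) < m * ‖(WithLp.equiv 2 (Fin n → ℝ)).symm x‖ ^ 2 := by positivity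
    _ ≤ _ := h
    _ = dotProduct (star x) (B *ᵥ x) := by simp

lemma inner_le_MNorm {n : ℕ} {B : Matrix (Fin n) (Fin n) ℝ} {m : ℝ} (hm : 0 < m)
    (hB : B.IsSymm) (hBlow : ∀ u : Euc n, m * ‖u‖ ^ 2 ≤ quadF B u)
    (hPD : B.PosDef) (r d : Euc n) :
    ⟪r, d⟫ ≤ MNorm B⁻¹ r * MNorm B d := by
  have hquad0 : ∀ u : Euc n, 0 ≤ quadF B u := fun u =>
    le_trans (by positivity) (hBlow u)
  set T := Matrix.toEuclideanLin B with hT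
  set s : Euc n := Matrix.toEuclideanLin B⁻¹ r with hs
  have hBs : T s = r := by
    rw [hT, hs, ← toEuclideanLin_mul',
      Matrix.mul_nonsing_inv B (isUnit_iff_ne_zero.mpr hPD.det_pos.ne')]
    simp [Matrix.toEuclideanLin_apply]
  have hss : quadF B s = quadF B⁻¹ r := by
    rw [quadF, ← hT, hBs, real_inner_comm]; rfl
  have hsd : ⟪s, T d⟫ = ⟪r, d⟫ := by rw [symB hB, hBs]
  have hexp : ∀ t : ℝ, 0 ≤ quadF B d * (t * t) + (-(2 * ⟪r, d⟫)) * t + quadF B⁻¹ r := by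
    intro t
    have h0 := hquad0 (s - t • d)
    have h1 : ⟪d, T s⟫ = ⟪r, d⟫ := by rw [hBs]; exact (real_inner_comm d r).symm
    have hss' : ⟪s, T s⟫ = quadF B⁻¹ r := hss
    have hdd : ⟪d, T d⟫ = quadF B d := rfl
    have key : quadF B (s - t • d)
        = quadF B d * (t * t) + (-(2 * ⟪r, d⟫)) * t + quadF B⁻¹ r := by
      simp only [quadF, ← hT, map_sub, _root_.map_smul, inner_sub_left, inner_sub_right,
        real_inner_smul_left, real_inner_smul_right]
      have hrr : ⟪r, (Matrix.toEuclideanLin B⁻¹) r⟫ = quadF B⁻¹ r := rfl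
      simp only [hsd, h1, hss', hdd, hrr]
      ring
    rw [key] at h0
    exact h0
  have hdisc := discrim_le_zero hexp
  rw [discrim] at hdisc
  have hsq : ⟪r, d⟫ ^ 2 ≤ quadF B⁻¹ r * quadF B d := by nlinarith
  have h1 : (0:ℝ) ≤ quadF B⁻¹ r := hss ▸ hquad0 s
  calc ⟪r, d⟫ ≤ |⟪r, d⟫| := le_abs_self _
    _ = Real.sqrt (⟪r, d⟫ ^ 2) := (Real.sqrt_sq_eq_abs _).symm
    _ ≤ Real.sqrt (quadF B⁻¹ r * quadF B d) := Real.sqrt_le_sqrt hsq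
    _ = MNorm B⁻¹ r * MNorm B d := by
        rw [MNorm, MNorm, Real.sqrt_mul h1]

lemma descent_lemma {n : ℕ} {L : ℝ} {g : Euc n → ℝ} {g' : Euc n → Euc n}
    (hg : ∀ y : Euc n, HasGradientAt g (g' y) y)
    (hLip : ∀ u v : Euc n, ‖g' u - g' v‖ ≤ L * ‖u - v‖)
    (x d : Euc n) {η : ℝ} (hη : 0 ≤ η) :
    g (x + η • d) ≤ g x + η * ⟪g' x, d⟫ + L * η ^ 2 * ‖d‖ ^ 2 / 2 := by
  set φ : ℝ → ℝ := fun t => g (x + t • d) - t * ⟪g' x, d⟫ - L * t ^ 2 * ‖d‖ ^ 2 / 2 with hφ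
  have hder : ∀ t : ℝ, HasDerivAt φ
      (⟪g' (x + t • d), d⟫ - ⟪g' x, d⟫ - L * t * ‖d‖ ^ 2) t := by
    intro t
    have hc : HasDerivAt (fun t : ℝ => x + t • d) d t := by
      simpa using (hasDerivAt_id t).smul_const d |>.const_add x
    have hgc : HasDerivAt (fun t : ℝ => g (x + t • d)) ⟪g' (x + t • d), d⟫ t := by
      have := (hg (x + t • d)).hasFDerivAt.comp_hasDerivAt t hc
      simpa [InnerProductSpace.toDual_apply_apply, Function.comp_def] using this
    have h2 : HasDerivAt (fun t : ℝ => t * ⟪g' x, d⟫) ⟪g' x, d⟫ t := by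
      simpa using (hasDerivAt_id t).mul_const (⟪g' x, d⟫ : ℝ)
    have h3 : HasDerivAt (fun t : ℝ => L * t ^ 2 * ‖d‖ ^ 2 / 2) (L * t * ‖d‖ ^ 2) t := by
      have := ((hasDerivAt_pow 2 t).const_mul L).mul_const (‖d‖ ^ 2)
      have := this.div_const 2
      refine this.congr_deriv ?_
      ring
    exact (hgc.sub h2).sub h3
  have hmono : AntitoneOn φ (Set.Icc 0 η) := by
    apply antitoneOn_of_deriv_nonpos (convex_Icc 0 η)
    · exact (Continuous.continuousOn (by
        have : Differentiable ℝ φ := fun t => (hder t).differentiableAt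
        exact this.continuous))
    · intro t ht
      exact (hder t).differentiableAt.differentiableWithinAt
    · intro t ht
      rw [interior_Icc] at ht
      rw [(hder t).deriv]
      have hb : ⟪g' (x + t • d) - g' x, d⟫ ≤ L * t * ‖d‖ ^ 2 := by
        calc ⟪g' (x + t • d) - g' x, d⟫ ≤ ‖g' (x + t • d) - g' x‖ * ‖d‖ :=
              real_inner_le_norm _ _
          _ ≤ (L * ‖(x + t • d) - x‖) * ‖d‖ := by
              gcongr; exact hLip _ _
          _ = L * (|t| * ‖d‖) * ‖d‖ := by rw [add_sub_cancel_left, norm_smul]; simp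
          _ = L * |t| * ‖d‖ ^ 2 := by ring
          _ = L * t * ‖d‖ ^ 2 := by rw [abs_of_pos ht.1]
      have := inner_sub_left (𝕜 := ℝ) (g' (x + t • d)) (g' x) d
      linarith [this ▸ hb]
  have h0 : φ η ≤ φ 0 := by
    rcases eq_or_lt_of_le hη with h | h
    · rw [← h]
    · exact hmono (Set.left_mem_Icc.mpr hη) (Set.mem_Icc.mpr ⟨hη, le_refl η⟩) hη
  have hφ0 : φ 0 = g x := by simp [hφ]
  rw [hφ0] at h0
  have hφη : φ η = g (x + η • d) - η * ⟪g' x, d⟫ - L * η ^ 2 * ‖d‖ ^ 2 / 2 := rfl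
  rw [hφη] at h0
  linarith

/-- `f(x + ηd) ≤ f(x) + η(ηL/(2m) - θ̄)‖d‖_B²` for `η ∈ (0,1]`; in
particular `f(x + ηd) ≤ f(x)` whenever `η < 2mθ̄/L`. -/
theorem descent_with_scaled_norm
    {n : ℕ} (L m θbar : ℝ)
    (g : Euc n → ℝ) (g' : Euc n → Euc n)
    (h₁ : Euc n → EReal) (h₂ : Euc n → ℝ)
    (x xp ξ r d : Euc n) (B : Matrix (Fin n) (Fin n) ℝ)
    (hL : 0 ≤ L)
    (hg : ∀ y : Euc n, HasGradientAt g (g' y) y)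
    (hLip : ∀ u v : Euc n, ‖g' u - g' v‖ ≤ L * ‖u - v‖)
    (hprop : ProperF h₁) (hlsc : LowerSemicontinuous h₁) (hconv : EConvexF h₁)
    (hh₂cont : Continuous h₂) (hh₂conv : ConvexOn ℝ Set.univ h₂)
    (hfin : h₁ x ≠ ⊤) (hfinp : h₁ xp ≠ ⊤)
    (hd : d = xp - x)
    (hξ : RSubgradAt h₂ ξ x)
    (hBsymm : B.IsSymm)
    (hm : 0 < m)
    (hBlow : ∀ u : Euc n, m * ‖u‖ ^ 2 ≤ quadF B u)
    (hθbar0 : 0 < θbar) (hθbar1 : θbar ≤ 1)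
    (hr : ESubgradAt h₁ (r - (g' x - ξ) - (Matrix.toEuclideanLin B) d) xp)
    (hres : MNorm B⁻¹ r ≤ (1 - θbar) * MNorm B d) :
    ∀ η : ℝ, 0 < η → η ≤ 1 →
      (fObj g h₁ h₂ (x + η • d) ≤ fObj g h₁ h₂ x +
        ((η * (η * L / (2 * m) - θbar) * quadF B d : ℝ) : EReal)) ∧
      (η < 2 * m * θbar / L → fObj g h₁ h₂ (x + η • d) ≤ fObj g h₁ h₂ x) := by
  intro η hη0 hη1
  have hquad0 : ∀ u : Euc n, 0 ≤ quadF B u := fun u => le_trans (by positivity) (hBlow u)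
  have hPD : B.PosDef := posDef_of_quad hm hBsymm hBlow
  have hMd0 : 0 ≤ MNorm B d := Real.sqrt_nonneg _
  have hMd2 : MNorm B d * MNorm B d = quadF B d := Real.mul_self_sqrt (hquad0 d)
  have hrd : ⟪r, d⟫ ≤ (1 - θbar) * quadF B d := by
    calc ⟪r, d⟫ ≤ MNorm B⁻¹ r * MNorm B d := inner_le_MNorm hm hBsymm hBlow hPD r d
      _ ≤ ((1 - θbar) * MNorm B d) * MNorm B d :=
          mul_le_mul_of_nonneg_right hres hMd0
      _ = (1 - θbar) * quadF B d := by rw [mul_assoc, hMd2]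
  set a : ℝ := (h₁ x).toReal with ha
  set b : ℝ := (h₁ xp).toReal with hb
  have hax : h₁ x = (a : EReal) := (EReal.coe_toReal hfin (hprop.1 x)).symm
  have hbx : h₁ xp = (b : EReal) := (EReal.coe_toReal hfinp (hprop.1 xp)).symm
  have hcomb : (1 - η) • x + η • xp = x + η • d := by rw [hd]; module
  have hconvη := hconv x xp (1 - η) η (by linarith) (le_of_lt hη0) (by ring)
  rw [hcomb, hax, hbx, ← EReal.coe_mul, ← EReal.coe_mul, ← EReal.coe_add] at hconvη
  have hne_top : h₁ (x + η • d) ≠ ⊤ := by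
    intro h
    exact (EReal.coe_lt_top _).not_ge (h ▸ hconvη)
  set c : ℝ := (h₁ (x + η • d)).toReal with hc
  have hcx : h₁ (x + η • d) = (c : EReal) :=
    (EReal.coe_toReal hne_top (hprop.1 _)).symm
  have hcle : c ≤ (1 - η) * a + η * b := by
    rw [hcx] at hconvη; exact_mod_cast hconvη
  -- subgradient inequality for h₁ at xp
  have hsub1 := hr x
  rw [hax, hbx, ← EReal.coe_add] at hsub1
  have hsub1' : b + ⟪r - (g' x - ξ) - (Matrix.toEuclideanLin B) d, x - xp⟫ ≤ a := by
    exact_mod_cast hsub1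
  have hxd : x - xp = -d := by rw [hd]; abel
  have hBdd : ⟪(Matrix.toEuclideanLin B) d, d⟫ = quadF B d :=
    (real_inner_comm ((Matrix.toEuclideanLin B) d) d).symm
  have hvd : ⟪r - (g' x - ξ) - (Matrix.toEuclideanLin B) d, x - xp⟫
      = -(⟪r, d⟫ - ⟪g' x, d⟫ + ⟪ξ, d⟫ - quadF B d) := by
    rw [hxd, inner_neg_right, inner_sub_left, inner_sub_left, inner_sub_left, hBdd]
    ring
  rw [hvd] at hsub1'
  have hba : b ≤ a + (⟪r, d⟫ - ⟪g' x, d⟫ + ⟪ξ, d⟫ - quadF B d) := by linarith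
  -- subgradient inequality for h₂ at x
  have hsub2 := hξ (x + η • d)
  rw [add_sub_cancel_left, real_inner_smul_right] at hsub2
  -- descent lemma
  have hdes := descent_lemma hg hLip x d (le_of_lt hη0)
  -- norm bound through quadF
  have hnorm : L * η ^ 2 * ‖d‖ ^ 2 / 2 ≤ η * (η * L / (2 * m)) * quadF B d := by
    have h1 : m * ‖d‖ ^ 2 ≤ quadF B d := hBlow d
    calc L * η ^ 2 * ‖d‖ ^ 2 / 2 = (η ^ 2 * L / (2 * m)) * (m * ‖d‖ ^ 2) := by
          field_simp
      _ ≤ (η ^ 2 * L / (2 * m)) * quadF B d := by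
          apply mul_le_mul_of_nonneg_left h1 (by positivity)
      _ = η * (η * L / (2 * m)) * quadF B d := by ring
  -- key real inequality
  have e1 : η * b ≤ η * (a + (⟪r, d⟫ - ⟪g' x, d⟫ + ⟪ξ, d⟫ - quadF B d)) :=
    mul_le_mul_of_nonneg_left hba hη0.le
  have e2 : η * ⟪r, d⟫ ≤ η * ((1 - θbar) * quadF B d) := by
    exact mul_le_mul_of_nonneg_left hrd hη0.le
  have hkey : g (x + η • d) + c - h₂ (x + η • d)
      ≤ (g x + a - h₂ x) + η * (η * L / (2 * m) - θbar) * quadF B d := by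
    linarith [hdes, hcle, hsub2, e1, e2, hnorm]
  constructor
  · rw [fObj, fObj, hcx, hax, ← EReal.coe_add, ← EReal.coe_sub, ← EReal.coe_add,
      ← EReal.coe_sub, ← EReal.coe_add]
    exact_mod_cast hkey
  · intro hηless
    have ht : η * (η * L / (2 * m) - θbar) * quadF B d ≤ 0 := by
      rcases eq_or_lt_of_le hL with hL0 | hLpos
      · exfalso
        rw [← hL0, div_zero] at hηless
        linarith
      · have h1 : η * L < 2 * m * θbar := (lt_div_iff₀ hLpos).mp hηless
        have hcoef : η * L / (2 * m) - θbar < 0 := by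
          rw [sub_neg, div_lt_iff₀ (by positivity)]
          linarith
        have : η * (η * L / (2 * m) - θbar) ≤ 0 :=
          le_of_lt (mul_neg_of_pos_of_neg hη0 hcoef)
        exact mul_nonpos_of_nonpos_of_nonneg this (hquad0 d)
    have h2 : fObj g h₁ h₂ x + ((η * (η * L / (2 * m) - θbar) * quadF B d : ℝ) : EReal)
        ≤ fObj g h₁ h₂ x := by
      calc fObj g h₁ h₂ x + ((η * (η * L / (2 * m) - θbar) * quadF B d : ℝ) : EReal)
          ≤ fObj g h₁ h₂ x + (0 : EReal) := by
            apply add_le_add_right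
            exact_mod_cast ht
        _ = fObj g h₁ h₂ x := add_zero _
    refine le_trans ?_ h2
    rw [fObj, fObj, hcx, hax, ← EReal.coe_add, ← EReal.coe_sub, ← EReal.coe_add,
      ← EReal.coe_sub, ← EReal.coe_add]
    exact_mod_cast hkey
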